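/- Let Ψ : ℝ → ℝ be a convex function, h > 0 and x ∈ ℝ. If Ψ(x+h) − Ψ(x−h) = Ψ(x+3h) − Ψ(x+h), then Ψ is affine на the interval [x−h, x+3h], i.e. there exist a, b ∈ ℝ with Ψ(t) = a·t + b for all t ∈ [x−h, x+3h]. -/

import Mathlib

/-- If `Ψ` is convex, `h > 0` and
`Ψ(x+h) − Ψ(x−h) = Ψ(x+3h) − Ψ(x+h)`, then `Ψ` is affine on `[x−h, x+3h]`. -/
theorem stmt7 (Ψ : ℝ → ℝ) (hΨ : ConvexOn ℝ Set.univ Ψ) (h x : ℝ) (hh : 0 < h)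
    (heq : Ψ (x + h) - Ψ (x - h) = Ψ (x + 3 * h) - Ψ (x + h)) :
    ∃ a b : ℝ, ∀ t ∈ Set.Icc (x - h) (x + 3 * h), Ψ t = a * t + b := by
  set p := x - h with hp
  set q := x + 3 * h with hq
  set m := x + h with hm
  have hMid : 2 * Ψ m = Ψ p + Ψ q := by linarith
  have hpm : p < m := by simp only [hp, hm]; linarith
  have hmq : m < q := by simp only [hm, hq]; linarith
  have hpq : p < q := hpm.trans hmq
  have hqp : q - p ≠ 0 := by linarith
  refine ⟨(Ψ q - Ψ p) / (q - p), Ψ p - (Ψ q - Ψ p) / (q - p) * p, ?_⟩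
  intro t ht
  obtain ⟨htp, htq⟩ := ht
  -- key: (q - p) * Ψ t = (q - t) * Ψ p + (t - p) * Ψ q
  have hub : (q - p) * Ψ t ≤ (q - t) * Ψ p + (t - p) * Ψ q := by
    have hD : (0:ℝ) < q - p := by linarith
    have w1 : (0:ℝ) ≤ (q - t) / (q - p) := div_nonneg (by linarith) hD.le
    have w2 : (0:ℝ) ≤ (t - p) / (q - p) := div_nonneg (by linarith) hD.le
    have wsum : (q - t) / (q - p) + (t - p) / (q - p) = 1 := by
      field_simp; ring
    have conv := hΨ.2 (Set.mem_univ p) (Set.mem_univ q) w1 w2 wsum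
    simp only [smul_eq_mul] at conv
    have hcomb : (q - t) / (q - p) * p + (t - p) / (q - p) * q = t := by
      first | (field_simp; ring) | field_simp
    rw [hcomb] at conv
    have h1 := mul_le_mul_of_nonneg_left conv hD.le
    have h2 : (q - p) * ((q - t) / (q - p) * Ψ p + (t - p) / (q - p) * Ψ q)
        = (q - t) * Ψ p + (t - p) * Ψ q := by first | (field_simp; ring) | field_simp
    linarith [h2 ▸ h1]
  have hlb : (q - t) * Ψ p + (t - p) * Ψ q ≤ (q - p) * Ψ t := by
    rcases le_or_gt t m with htm | htm
    · -- use m between t and q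
      have hD : (0:ℝ) < q - t := by linarith
      have w1 : (0:ℝ) ≤ (q - m) / (q - t) := div_nonneg (by linarith) hD.le
      have w2 : (0:ℝ) ≤ (m - t) / (q - t) := div_nonneg (by linarith) hD.le
      have wsum : (q - m) / (q - t) + (m - t) / (q - t) = 1 := by
        field_simp; ring
      have conv := hΨ.2 (Set.mem_univ t) (Set.mem_univ q) w1 w2 wsum
      simp only [smul_eq_mul] at conv
      have hcomb : (q - m) / (q - t) * t + (m - t) / (q - t) * q = m := by
        first | (field_simp; ring) | field_simp
      rw [hcomb] at conv
      have h1 := mul_le_mul_of_nonneg_left conv hD.le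
      have h2 : (q - t) * ((q - m) / (q - t) * Ψ t + (m - t) / (q - t) * Ψ q)
          = (q - m) * Ψ t + (m - t) * Ψ q := by first | (field_simp; ring) | field_simp
      have h3 : (q - t) * Ψ m ≤ (q - m) * Ψ t + (m - t) * Ψ q := by linarith [h2 ▸ h1]
      have h4 : (q - t) * (2 * Ψ m) = (q - t) * (Ψ p + Ψ q) := by rw [hMid]
      have e5 : 2 * (q - m) = q - p := by simp only [hp, hq, hm]; ring
      have h5 : 2 * (q - m) * Ψ t = (q - p) * Ψ t := by linear_combination Ψ t * e5
      have e6 : 2 * m - t - q = -(t - p) := by simp only [hp, hq, hm]; ring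
      have h6 : (2 * m - t - q) * Ψ q = -((t - p) * Ψ q) := by linear_combination Ψ q * e6
      linarith [h3, h4, h5, h6]
    · -- use m between p and t
      have hD : (0:ℝ) < t - p := by linarith
      have w1 : (0:ℝ) ≤ (t - m) / (t - p) := div_nonneg (by linarith) hD.le
      have w2 : (0:ℝ) ≤ (m - p) / (t - p) := div_nonneg (by linarith) hD.le
      have wsum : (t - m) / (t - p) + (m - p) / (t - p) = 1 := by
        field_simp; ring
      have conv := hΨ.2 (Set.mem_univ p) (Set.mem_univ t) w1 w2 wsum
      simp only [smul_eq_mul] at conv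
      have hcomb : (t - m) / (t - p) * p + (m - p) / (t - p) * t = m := by
        first | (field_simp; ring) | field_simp
      rw [hcomb] at conv
      have h1 := mul_le_mul_of_nonneg_left conv hD.le
      have h2 : (t - p) * ((t - m) / (t - p) * Ψ p + (m - p) / (t - p) * Ψ t)
          = (t - m) * Ψ p + (m - p) * Ψ t := by first | (field_simp; ring) | field_simp
      have h3 : (t - p) * Ψ m ≤ (t - m) * Ψ p + (m - p) * Ψ t := by linarith [h2 ▸ h1]
      have h4 : (t - p) * (2 * Ψ m) = (t - p) * (Ψ p + Ψ q) := by rw [hMid]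
      have e5 : 2 * (m - p) = q - p := by simp only [hp, hq, hm]; ring
      have h5 : 2 * (m - p) * Ψ t = (q - p) * Ψ t := by linear_combination Ψ t * e5
      have e6 : 2 * m - p - t = q - t := by simp only [hp, hq, hm]; ring
      have h6 : (2 * m - p - t) * Ψ p = (q - t) * Ψ p := by linear_combination Ψ p * e6
      linarith [h3, h4, h5, h6]
  have hkey : (q - p) * Ψ t = (q - t) * Ψ p + (t - p) * Ψ q := le_antisymm hub hlb
  field_simp
  linear_combination hkey
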